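/- arXiv:1609.02104 — 2 statements merged into one kernel-verified Lean document; each statement's English description precedes it below -/
import Mathlib

section
/- In the VCG auction with linear utility U(t, π) = −α_U t − β_U π (β_U > 0) and payment function ω_k(t) = π_k(t) + Δ/β_U where Δ = U_i − U*, the winning agent i's expected profit E[profit] = Σ_k p_k (ω_k(t̂_k) − c_k) satisfies: (1) if U_i > U* > U_i^C then E[profit] < 0; (2) if U_i^C > U* > U_i then E[profit] > 0. -/
/-- Sign of the VCG winner's expected profit relative to the second-best utility. -/
theorem stmt5 {n : ℕ} (p th π c : Fin n → ℝ) (αU βU Ustar : ℝ)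
    (hβU : 0 < βU) (hp : ∀ k, 0 ≤ p k) (hsum : ∑ k, p k = 1)
    (Ui UiC Δ Eprofit : ℝ)
    (hUi : Ui = ∑ k, p k * (-αU * th k - βU * π k))
    (hUiC : UiC = ∑ k, p k * (-αU * th k - βU * c k))
    (hΔ : Δ = Ui - Ustar)
    (hE : Eprofit = ∑ k, p k * ((π k + Δ / βU) - c k)) :
    (Ui > Ustar → Ustar > UiC → Eprofit < 0) ∧
    (UiC > Ustar → Ustar > Ui → Eprofit > 0) := by
  have hβ0 : βU ≠ 0 := ne_of_gt hβU
  have expand : ∀ k, βU * (p k * ((π k + Δ / βU) - c k)) =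
      (p k * (-αU * th k - βU * c k)) - (p k * (-αU * th k - βU * π k)) + Δ * p k := by
    intro k; field_simp; ring
  have key : βU * Eprofit = UiC - Ustar := by
    rw [hE, Finset.mul_sum]
    calc ∑ k, βU * (p k * ((π k + Δ / βU) - c k))
        = ∑ k, ((p k * (-αU * th k - βU * c k)) - (p k * (-αU * th k - βU * π k)) + Δ * p k) := by
          exact Finset.sum_congr rfl fun k _ => expand k
      _ = (∑ k, p k * (-αU * th k - βU * c k)) - (∑ k, p k * (-αU * th k - βU * π k))
            + Δ * ∑ k, p k := by
          rw [Finset.sum_add_distrib, Finset.sum_sub_distrib, Finset.mul_sum]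
      _ = UiC - Ustar := by rw [hsum, ← hUiC, ← hUi, hΔ]; ring
  constructor
  · intro _ h2; nlinarith
  · intro h1 _; nlinarith
end

section
/- Asynchronous Bertrand dynamics converge: with f₁, f₂ affine, a₁a₂ ∈ [0,1), define on ℝ² the maps F₁(μ₁,μ₂) = (f₁(μ₂), μ₂), F₂(μ₁,μ₂) = (μ₁, f₂(μ₁)), F₃(μ₁,μ₂) = (f₁(μ₂), f₂(μ₁)). Suppose (G_x)_{x≥1} is a sequence with each G_x ∈ {F₁, F₂, F₃} such that both Σ_x 1{G_x ≠ F₁} and Σ_x 1{G_x ≠ F₂} diverge (each agent updates infinitely often). Then G_x ∘ ⋯ ∘ G₁(μ₁,₀, μ₂,₀) → (μ₁*, μ₂*) for any initial point, where (μ₁*, μ₂*) is the unique common fixed point of F₁, F₂, F₃. -/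
open Filter in
/-- Asynchronous Bertrand price dynamics converge when both agents update infinitely often. -/
theorem stmt12 (a₁ a₂ b₁ b₂ : ℝ) (h0 : 0 ≤ a₁ * a₂) (h1 : a₁ * a₂ < 1)
    (f₁ f₂ : ℝ → ℝ)
    (hf₁ : ∀ z, f₁ z = a₁ * z + b₁) (hf₂ : ∀ z, f₂ z = a₂ * z + b₂)
    (μ₁star μ₂star : ℝ) (hfix₁ : μ₁star = f₁ μ₂star) (hfix₂ : μ₂star = f₂ μ₁star)
    (F₁ F₂ F₃ : ℝ × ℝ → ℝ × ℝ)
    (hF₁ : ∀ μ, F₁ μ = (f₁ μ.2, μ.2))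
    (hF₂ : ∀ μ, F₂ μ = (μ.1, f₂ μ.1))
    (hF₃ : ∀ μ, F₃ μ = (f₁ μ.2, f₂ μ.1))
    (G : ℕ → (ℝ × ℝ → ℝ × ℝ))
    (hG : ∀ x, G x = F₁ ∨ G x = F₂ ∨ G x = F₃)
    (hinf₁ : {x : ℕ | G x ≠ F₁}.Infinite)
    (hinf₂ : {x : ℕ | G x ≠ F₂}.Infinite)
    (μ₀ : ℝ × ℝ) (orbit : ℕ → ℝ × ℝ)
    (horbit0 : orbit 0 = μ₀)
    (horbit : ∀ x, orbit (x + 1) = G x (orbit x)) :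
    Tendsto orbit atTop (nhds (μ₁star, μ₂star)) := by
  classical
  have key₁ : ∀ z, f₁ z - μ₁star = a₁ * (z - μ₂star) := by
    intro z; rw [hf₁, hfix₁, hf₁]; ring
  have key₂ : ∀ z, f₂ z - μ₂star = a₂ * (z - μ₁star) := by
    intro z; rw [hf₂, hfix₂, hf₂]; ring
  set ρ : ℝ := Real.sqrt ((1 + a₁ * a₂) / 2) with hρdef
  have hρsq : ρ ^ 2 = (1 + a₁ * a₂) / 2 := Real.sq_sqrt (by linarith)
  have hρpos : 0 < ρ := Real.sqrt_pos.mpr (by linarith)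
  have hρlt : ρ < 1 := by nlinarith
  have habs : |a₁| * |a₂| = a₁ * a₂ := by rw [← abs_mul, abs_of_nonneg h0]
  set δ : ℝ := (ρ ^ 2 - |a₁| * |a₂|) / (|a₂| + 1) with hδdef
  have ha₂pos : (0 : ℝ) < |a₂| + 1 := by positivity
  have hδpos : 0 < δ := div_pos (by rw [habs]; nlinarith) ha₂pos
  set w : ℝ := (|a₁| + δ) / ρ with hwdef
  have hwpos : 0 < w := div_pos (by positivity) hρpos
  have hw1 : |a₁| ≤ ρ * w := by
    rw [hwdef, mul_div_assoc', mul_comm, mul_div_assoc, div_self hρpos.ne', mul_one]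
    linarith
  have hw2 : w * |a₂| ≤ ρ := by
    rw [hwdef, div_mul_eq_mul_div, div_le_iff₀ hρpos]
    have hδeq : δ * (|a₂| + 1) = ρ ^ 2 - |a₁| * |a₂| := by
      rw [hδdef, div_mul_cancel₀ _ ha₂pos.ne']
    nlinarith [abs_nonneg a₂, hδpos.le, pow_two ρ]
  -- error components
  set v₁ : ℕ → ℝ := fun x => |(orbit x).1 - μ₁star| with hv₁
  set v₂ : ℕ → ℝ := fun x => w * |(orbit x).2 - μ₂star| with hv₂
  set V : ℕ → ℝ := fun x => max (v₁ x) (v₂ x) with hV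
  have hv₁nn : ∀ x, 0 ≤ v₁ x := fun x => abs_nonneg _
  have hv₂nn : ∀ x, 0 ≤ v₂ x := fun x => mul_nonneg hwpos.le (abs_nonneg _)
  have hVnn : ∀ x, 0 ≤ V x := fun x => le_trans (hv₁nn x) (le_max_left _ _)
  -- step lemmas
  have upd₁ : ∀ x, G x ≠ F₂ → v₁ (x + 1) ≤ ρ * V x := by
    intro x hx
    have hcalc : (orbit (x + 1)).1 = f₁ ((orbit x).2) := by
      rcases hG x with h | h | h
      · rw [horbit, h, hF₁]
      · exact absurd h hx
      · rw [horbit, h, hF₃]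
    have : v₁ (x + 1) = |a₁| * |(orbit x).2 - μ₂star| := by
      simp only [hv₁, hcalc, key₁, abs_mul]
    rw [this]
    calc |a₁| * |(orbit x).2 - μ₂star| ≤ (ρ * w) * |(orbit x).2 - μ₂star| :=
          mul_le_mul_of_nonneg_right hw1 (abs_nonneg _)
      _ = ρ * v₂ x := by rw [hv₂]; ring
      _ ≤ ρ * V x := mul_le_mul_of_nonneg_left (le_max_right _ _) hρpos.le
  have upd₂ : ∀ x, G x ≠ F₁ → v₂ (x + 1) ≤ ρ * V x := by
    intro x hx
    have hcalc : (orbit (x + 1)).2 = f₂ ((orbit x).1) := by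
      rcases hG x with h | h | h
      · exact absurd h hx
      · rw [horbit, h, hF₂]
      · rw [horbit, h, hF₃]
    have : v₂ (x + 1) = w * (|a₂| * |(orbit x).1 - μ₁star|) := by
      simp only [hv₂, hcalc, key₂, abs_mul]
    rw [this]
    calc w * (|a₂| * |(orbit x).1 - μ₁star|) = (w * |a₂|) * |(orbit x).1 - μ₁star| := by ring
      _ ≤ ρ * |(orbit x).1 - μ₁star| := mul_le_mul_of_nonneg_right hw2 (abs_nonneg _)
      _ = ρ * v₁ x := rfl
      _ ≤ ρ * V x := mul_le_mul_of_nonneg_left (le_max_left _ _) hρpos.le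
  have keep₁ : ∀ x, G x = F₂ → v₁ (x + 1) = v₁ x := by
    intro x hx
    simp only [hv₁, horbit, hx, hF₂]
  have keep₂ : ∀ x, G x = F₁ → v₂ (x + 1) = v₂ x := by
    intro x hx
    simp only [hv₂, horbit, hx, hF₁]
  -- monotonicity
  have hρV : ∀ x, ρ * V x ≤ V x := by
    intro x; nlinarith [hVnn x]
  have mono : ∀ x, V (x + 1) ≤ V x := by
    intro x
    have b₁ : v₁ (x + 1) ≤ V x := by
      by_cases h : G x = F₂
      · rw [keep₁ x h]; exact le_max_left _ _
      · exact le_trans (upd₁ x h) (hρV x)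
    have b₂ : v₂ (x + 1) ≤ V x := by
      by_cases h : G x = F₁
      · rw [keep₂ x h]; exact le_max_right _ _
      · exact le_trans (upd₂ x h) (hρV x)
    exact max_le b₁ b₂
  have Vmono : ∀ x y, x ≤ y → V y ≤ V x := by
    intro x y h
    induction y, h using Nat.le_induction with
    | base => exact le_rfl
    | succ n hn ih => exact le_trans (mono n) ih
  -- persistence of the contracted bound
  have persist₁ : ∀ x y, x < y → G x ≠ F₂ → v₁ y ≤ ρ * V x := by
    intro x y hxy hx
    induction y with
    | zero => omega
    | succ n ih =>
      rcases Nat.lt_succ_iff_lt_or_eq.mp hxy with h | h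
      · by_cases hn : G n = F₂
        · rw [keep₁ n hn]; exact ih h
        · exact le_trans (upd₁ n hn)
            (mul_le_mul_of_nonneg_left (Vmono x n (le_of_lt h)) hρpos.le)
      · subst h; exact upd₁ x hx
  have persist₂ : ∀ x y, x < y → G x ≠ F₁ → v₂ y ≤ ρ * V x := by
    intro x y hxy hx
    induction y with
    | zero => omega
    | succ n ih =>
      rcases Nat.lt_succ_iff_lt_or_eq.mp hxy with h | h
      · by_cases hn : G n = F₁
        · rw [keep₂ n hn]; exact ih h
        · exact le_trans (upd₂ n hn)
            (mul_le_mul_of_nonneg_left (Vmono x n (le_of_lt h)) hρpos.le)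
      · subst h; exact upd₂ x hx
  -- contraction step
  have contract : ∀ s : ℕ, ∃ t : ℕ, s ≤ t ∧ V t ≤ ρ * V s := by
    intro s
    obtain ⟨x, hxmem, hxs⟩ := hinf₂.exists_gt s
    obtain ⟨y, hymem, hys⟩ := hinf₁.exists_gt s
    refine ⟨max x y + 1, by omega, ?_⟩
    have hb₁ : v₁ (max x y + 1) ≤ ρ * V x :=
      persist₁ x (max x y + 1) (by omega) hxmem
    have hb₂ : v₂ (max x y + 1) ≤ ρ * V y :=
      persist₂ y (max x y + 1) (by omega) hymem
    refine max_le (le_trans hb₁ ?_) (le_trans hb₂ ?_)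
    · exact mul_le_mul_of_nonneg_left (Vmono s x hxs.le) hρpos.le
    · exact mul_le_mul_of_nonneg_left (Vmono s y hys.le) hρpos.le
  choose nxt hnle hncon using contract
  set T : ℕ → ℕ := fun n => nxt^[n] 0 with hT
  have hTbound : ∀ n, V (T n) ≤ ρ ^ n * V 0 := by
    intro n
    induction n with
    | zero => simp [hT]
    | succ n ih =>
      have hstep : T (n + 1) = nxt (T n) := by
        simp only [hT, Function.iterate_succ_apply']
      rw [hstep, pow_succ]
      calc V (nxt (T n)) ≤ ρ * V (T n) := hncon (T n)
        _ ≤ ρ * (ρ ^ n * V 0) := mul_le_mul_of_nonneg_left ih hρpos.le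
        _ = ρ ^ n * ρ * V 0 := by ring
  have hVtend : Tendsto V atTop (nhds 0) := by
    rw [Metric.tendsto_atTop]
    intro ε hε
    have hpow : Tendsto (fun n => ρ ^ n * V 0) atTop (nhds 0) := by
      have := (tendsto_pow_atTop_nhds_zero_of_lt_one hρpos.le hρlt).mul_const (V 0)
      simpa using this
    obtain ⟨n, hn⟩ := (hpow.eventually (gt_mem_nhds hε)).exists
    refine ⟨T n, fun x hx => ?_⟩
    rw [Real.dist_eq, abs_of_nonneg (by linarith [hVnn x, (abs_nonneg ((orbit x).1 - μ₁star))] : (0:ℝ) ≤ V x - 0)]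
    have : V x ≤ V (T n) := Vmono (T n) x hx
    calc V x - 0 = V x := by ring
      _ ≤ V (T n) := this
      _ ≤ ρ ^ n * V 0 := hTbound n
      _ < ε := hn
  have h1 : Tendsto (fun x => (orbit x).1) atTop (nhds μ₁star) := by
    rw [tendsto_iff_dist_tendsto_zero]
    have hsq : Tendsto (fun x => |(orbit x).1 - μ₁star|) atTop (nhds 0) :=
      squeeze_zero (fun x => abs_nonneg _) (fun x => le_max_left (v₁ x) (v₂ x)) hVtend
    simpa [Real.dist_eq] using hsq
  have h2 : Tendsto (fun x => (orbit x).2) atTop (nhds μ₂star) := by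
    rw [tendsto_iff_dist_tendsto_zero]
    have hsq : Tendsto (fun x => |(orbit x).2 - μ₂star|) atTop (nhds 0) := by
      have hub : ∀ x, |(orbit x).2 - μ₂star| ≤ V x / w := by
        intro x
        rw [le_div_iff₀ hwpos]
        calc |(orbit x).2 - μ₂star| * w = v₂ x := by rw [hv₂]; ring
          _ ≤ V x := le_max_right _ _
      have hdiv : Tendsto (fun x => V x / w) atTop (nhds 0) := by
        have := hVtend.div_const w
        simpa using this
      exact squeeze_zero (fun x => abs_nonneg _) hub hdiv
    simpa [Real.dist_eq] using hsq
  exact h1.prodMk_nhds h2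
end
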